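/- For every nonzero integer q there exists a two-sided arithmetic progression I(q) contained in I = {3^{l-1}(3k+1) : k ∈ ℤ, l ∈ ℕ, l ≥ 1} such that (I(q) + q) ∩ I = ∅. -/
import Mathlib


/-- The index set `I = {3^(l-1)(3k+1) : k ∈ ℤ, l ≥ 1}`. -/
def gaussianIndexSet : Set ℤ :=
  {n : ℤ | ∃ (k : ℤ) (l : ℕ), 1 ≤ l ∧ n = 3 ^ (l - 1) * (3 * k + 1)}

lemma mem_gauss (r : ℕ) (t : ℤ) : (3:ℤ) ^ r * (3 * t + 1) ∈ gaussianIndexSet := by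
  exact ⟨t, r + 1, by omega, by simp⟩

lemma notin_gauss (r : ℕ) (t : ℤ) : (3:ℤ) ^ r * (3 * t + 2) ∉ gaussianIndexSet := by
  rintro ⟨k, l, hl, h⟩
  set s := l - 1 with hs
  rcases le_total r s with hle | hle
  · have : (3:ℤ) ^ r * (3 * t + 2) = 3 ^ r * (3 ^ (s - r) * (3 * k + 1)) := by
      rw [h, ← mul_assoc, ← pow_add]; congr 2; omega
    have h2 : (3:ℤ) * t + 2 = 3 ^ (s - r) * (3 * k + 1) := by
      have h3 : (3:ℤ) ^ r ≠ 0 := by positivity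
      exact mul_left_cancel₀ h3 this
    rcases Nat.eq_zero_or_pos (s - r) with h0 | h0
    · rw [h0] at h2; simp at h2; omega
    · obtain ⟨u, hu⟩ : ∃ u : ℕ, s - r = u + 1 := ⟨s - r - 1, by omega⟩
      rw [hu, pow_succ] at h2
      set c := (3:ℤ) ^ u * (3 * k + 1) with hc
      have : (3:ℤ) * t + 2 = c * 3 := by rw [h2]; ring
      omega
  · have : (3:ℤ) ^ s * (3 ^ (r - s) * (3 * t + 2)) = 3 ^ s * (3 * k + 1) := by
      rw [← h, ← mul_assoc, ← pow_add]; congr 2; omega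
    have h2 : (3:ℤ) ^ (r - s) * (3 * t + 2) = 3 * k + 1 := by
      have h3 : (3:ℤ) ^ s ≠ 0 := by positivity
      exact mul_left_cancel₀ h3 this
    rcases Nat.eq_zero_or_pos (r - s) with h0 | h0
    · rw [h0] at h2; simp at h2; omega
    · obtain ⟨u, hu⟩ : ∃ u : ℕ, r - s = u + 1 := ⟨r - s - 1, by omega⟩
      rw [hu, pow_succ] at h2
      set c := (3:ℤ) ^ u * (3 * t + 2) with hc
      have : c * 3 = 3 * k + 1 := by rw [← h2]; ring
      omega

lemma decomp : ∀ n : ℕ, ∀ q : ℤ, q.natAbs ≤ n → q ≠ 0 →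
    ∃ (r : ℕ) (u : ℤ), q = 3 ^ r * u ∧ ¬ (3 ∣ u) := by
  intro n
  induction n with
  | zero => intro q h hq; exfalso; apply hq; omega
  | succ n ih =>
    intro q h hq
    by_cases h3 : (3:ℤ) ∣ q
    · obtain ⟨q', rfl⟩ := h3
      have hq' : q' ≠ 0 := by rintro rfl; simp at hq
      have hna : q'.natAbs ≤ n := by
        have h1 : (3 * q').natAbs = 3 * q'.natAbs := by
          rw [Int.natAbs_mul]; rfl
        have h2 : 1 ≤ q'.natAbs := by
          rcases Nat.eq_zero_or_pos q'.natAbs with h0 | h0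
          · exfalso; apply hq'; omega
          · omega
        omega
      obtain ⟨r, u, hru, hu⟩ := ih q' hna hq'
      exact ⟨r + 1, u, by rw [hru]; ring, hu⟩
    · exact ⟨0, q, by ring, h3⟩

theorem shifted_progression_avoids_index_set :
    ∀ q : ℤ, q ≠ 0 →
      ∃ a d : ℤ, d ≠ 0 ∧
        (∀ j : ℤ, a + j * d ∈ gaussianIndexSet) ∧
        (∀ j : ℤ, a + j * d + q ∉ gaussianIndexSet) := by
  intro q hq
  obtain ⟨r, u, rfl, hu⟩ := decomp q.natAbs q le_rfl hq
  have hm : u % 3 = 1 ∨ u % 3 = 2 := by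
    rw [Int.dvd_iff_emod_eq_zero] at hu
    omega
  have hudecomp : u = 3 * (u / 3) + u % 3 := (Int.mul_ediv_add_emod u 3).symm
  set m := u / 3 with hmdef
  rcases hm with h1 | h2
  · -- u = 3m + 1 : take a = 3^r, d = 3^(r+1)
    refine ⟨3 ^ r, 3 ^ (r + 1), by positivity, ?_, ?_⟩
    · intro j
      have : (3:ℤ) ^ r + j * 3 ^ (r + 1) = 3 ^ r * (3 * j + 1) := by ring
      rw [this]; exact mem_gauss r j
    · intro j
      have : (3:ℤ) ^ r + j * 3 ^ (r + 1) + 3 ^ r * u = 3 ^ r * (3 * (j + m) + 2) := by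
        have : u = 3 * m + 1 := by omega
        rw [this]; ring
      rw [this]; exact notin_gauss r (j + m)
  · -- u = 3m + 2 : take a = 3^r * (4 - 3m), d = 9 * 3^r
    refine ⟨3 ^ r * (4 - 3 * m), 9 * 3 ^ r, by positivity, ?_, ?_⟩
    · intro j
      have : (3:ℤ) ^ r * (4 - 3 * m) + j * (9 * 3 ^ r) = 3 ^ r * (3 * (3 * j - m + 1) + 1) := by
        ring
      rw [this]; exact mem_gauss r (3 * j - m + 1)
    · intro j
      have h3 : (3:ℤ) ^ r * (4 - 3 * m) + j * (9 * 3 ^ r) + 3 ^ r * u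
          = 3 ^ (r + 1) * (3 * j + 2) := by
        have : u = 3 * m + 2 := by omega
        rw [this, pow_succ]; ring
      rw [h3]; exact notin_gauss (r + 1) j
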